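/- Let r̄ : ℝ → ℝ be continuous, let D(t,T) := exp(−∫_t^T r̄(s) ds) and μ*(y,t,T) := B*(t,T)(y + Σ_rz(0,t)) + ½ B*(t,T)² Σ_rr(0,t). Then for fixed reals y and t, the function T ↦ −ln(D(t,T) e^{−μ*(y,t,T)}) is differentiable and its derivative at T equals r̄(T) + ψ_r(t,T) φ_r(t,T) (y + Σ_rz(0,t) + B*(t,T) Σ_rr(0,t)). This is the leading-order instantaneous forward rate of the model. -/

import Mathlib

open MeasureTheory intervalIntegral

/-- Mean-reversion factor `φ_r(s,v) := exp(−∫_s^v α u du)`. -/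
noncomputable def phiR (α : ℝ → ℝ) (s v : ℝ) : ℝ := Real.exp (-∫ u in s..v, α u)

/-- Short-rate variance `Σ_rr(s,v) := ∫_s^v φ_r(u,v)² σ(u)² du`. -/
noncomputable def sigmaRR (α σ : ℝ → ℝ) (s v : ℝ) : ℝ :=
  ∫ u in s..v, (phiR α u v) ^ 2 * (σ u) ^ 2

/-- Smile dispersion factor `ψ_r(s,v) := exp(½ γ(v)² Σ_rr(s,v))`. -/
noncomputable def psiR (α σ γ : ℝ → ℝ) (s v : ℝ) : ℝ :=
  Real.exp ((1 / 2) * (γ v) ^ 2 * sigmaRR α σ s v)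

/-- Covariance `Σ_rz(s,v) := ∫_s^v ψ_r(s,u) φ_r(u,v) Σ_rr(s,u) du`. -/
noncomputable def sigmaRZ (α σ γ : ℝ → ℝ) (s v : ℝ) : ℝ :=
  ∫ u in s..v, psiR α σ γ s u * phiR α u v * sigmaRR α σ s u

/-- Integrated-rate variance `Σ_zz(s,v) := 2 ∫_s^v ψ_r(s,u) Σ_rz(s,u) du`. -/
noncomputable def sigmaZZ (α σ γ : ℝ → ℝ) (s v : ℝ) : ℝ :=
  2 * ∫ u in s..v, psiR α σ γ s u * sigmaRZ α σ γ s u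

/-- `B*(s,v) := ∫_s^v ψ_r(s,u) φ_r(s,u) du`. -/
noncomputable def Bstar (α σ γ : ℝ → ℝ) (s v : ℝ) : ℝ :=
  ∫ u in s..v, psiR α σ γ s u * phiR α s u

/-- `B⁺(s,t₁,v) := (B*(s,v) − B*(s,t₁)) / φ_r(s,t₁)`. -/
noncomputable def Bplus (α σ γ : ℝ → ℝ) (s t₁ v : ℝ) : ℝ :=
  (Bstar α σ γ s v - Bstar α σ γ s t₁) / phiR α s t₁

private lemma contPrim (f : ℝ → ℝ) (hf : Continuous f) (a : ℝ) :
    Continuous (fun v => ∫ u in a..v, f u) :=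
  intervalIntegral.continuous_primitive (fun _ _ => hf.intervalIntegrable _ _) a

private lemma hasDerivPrim (f : ℝ → ℝ) (hf : Continuous f) (a T : ℝ) :
    HasDerivAt (fun v => ∫ u in a..v, f u) (f T) T :=
  intervalIntegral.integral_hasDerivAt_right (hf.intervalIntegrable _ _)
    (hf.stronglyMeasurableAtFilter _ _) hf.continuousAt

private lemma sigmaRR_eq (α σ : ℝ → ℝ) (hα : Continuous α) (t v : ℝ) :
    sigmaRR α σ t v = Real.exp (-2 * ∫ u in t..v, α u) *
      ∫ u in t..v, Real.exp (2 * ∫ x in t..u, α x) * (σ u) ^ 2 := by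
  rw [sigmaRR, ← intervalIntegral.integral_const_mul]
  apply intervalIntegral.integral_congr
  intro u _
  have h : (∫ x in u..v, α x) = (∫ x in t..v, α x) - ∫ x in t..u, α x :=
    (intervalIntegral.integral_interval_sub_left
      (hα.intervalIntegrable _ _) (hα.intervalIntegrable _ _)).symm
  simp only [phiR, h]
  have he : Real.exp (-((∫ x in t..v, α x) - ∫ x in t..u, α x)) ^ 2
      = Real.exp (-2 * ∫ x in t..v, α x) * Real.exp (2 * ∫ x in t..u, α x) := by
    rw [sq, ← Real.exp_add, ← Real.exp_add]
    congr 1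
    ring
  rw [he]
  ring

private lemma cont_sigmaRR (α σ : ℝ → ℝ) (hα : Continuous α) (hσ : Continuous σ) (t : ℝ) :
    Continuous (fun v => sigmaRR α σ t v) := by
  have h1 : Continuous (fun v => Real.exp (-2 * ∫ u in t..v, α u)) :=
    Real.continuous_exp.comp ((continuous_const.mul (contPrim α hα t)))
  have h2 : Continuous (fun v => ∫ u in t..v, Real.exp (2 * ∫ x in t..u, α x) * (σ u) ^ 2) := by
    apply contPrim
    exact (Real.continuous_exp.comp (continuous_const.mul (contPrim α hα t))).mul
      (hσ.pow 2)
  have := h1.mul h2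
  refine this.congr fun v => ?_
  exact (sigmaRR_eq α σ hα t v).symm

private lemma cont_psi_phi (α σ γ : ℝ → ℝ) (hα : Continuous α) (hσ : Continuous σ)
    (hγ : Continuous γ) (t : ℝ) :
    Continuous (fun v => psiR α σ γ t v * phiR α t v) := by
  have hpsi : Continuous (fun v => psiR α σ γ t v) := by
    unfold psiR
    exact Real.continuous_exp.comp
      ((continuous_const.mul (hγ.pow 2)).mul (cont_sigmaRR α σ hα hσ t))
  have hphi : Continuous (fun v => phiR α t v) := by
    unfold phiR
    exact Real.continuous_exp.comp (contPrim α hα t).neg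
  exact hpsi.mul hphi

/-- For continuous `r̄`, with `D(t,T) := exp(−∫_t^T r̄)` and
`μ*(y,t,T) := B*(t,T)(y + Σ_rz(0,t)) + ½ B*(t,T)² Σ_rr(0,t)`, the function
`T ↦ −ln(D(t,T) e^{−μ*(y,t,T)})` is differentiable with derivative at `T` equal to
`r̄(T) + ψ_r(t,T) φ_r(t,T) (y + Σ_rz(0,t) + B*(t,T) Σ_rr(0,t))`: the leading-order
instantaneous forward rate of the model. -/
theorem leading_order_forward_rate (α σ γ rbar : ℝ → ℝ)
    (hα : Continuous α) (hσ : Continuous σ) (hγ : Continuous γ)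
    (hrbar : Continuous rbar) (y t : ℝ)
    (D : ℝ → ℝ → ℝ) (hD : ∀ t₁ T, D t₁ T = Real.exp (-∫ s in t₁..T, rbar s))
    (μstar : ℝ → ℝ → ℝ → ℝ)
    (hμ : ∀ y' t' T, μstar y' t' T =
      Bstar α σ γ t' T * (y' + sigmaRZ α σ γ 0 t')
        + (1 / 2) * (Bstar α σ γ t' T) ^ 2 * sigmaRR α σ 0 t') :
    ∀ T : ℝ, HasDerivAt (fun S => -Real.log (D t S * Real.exp (-μstar y t S)))
      (rbar T + psiR α σ γ t T * phiR α t T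
        * (y + sigmaRZ α σ γ 0 t + Bstar α σ γ t T * sigmaRR α σ 0 t)) T := by
  intro T
  have hfun : (fun S => -Real.log (D t S * Real.exp (-μstar y t S)))
      = fun S => (∫ s in t..S, rbar s) + μstar y t S := by
    funext S
    rw [hD, ← Real.exp_add, Real.log_exp]
    ring
  rw [hfun]
  have hI : HasDerivAt (fun S => ∫ s in t..S, rbar s) (rbar T) T :=
    hasDerivPrim rbar hrbar t T
  have hB : HasDerivAt (fun S => Bstar α σ γ t S) (psiR α σ γ t T * phiR α t T) T := by
    unfold Bstar
    exact hasDerivPrim _ (cont_psi_phi α σ γ hα hσ hγ t) t T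
  set c1 := y + sigmaRZ α σ γ 0 t
  set c2 := sigmaRR α σ 0 t
  set P := psiR α σ γ t T * phiR α t T
  have hμd : HasDerivAt (fun S => μstar y t S) (P * c1 + (1/2) * (2 * Bstar α σ γ t T * P) * c2) T := by
    have h1 : HasDerivAt (fun S => Bstar α σ γ t S * c1) (P * c1) T := hB.mul_const c1
    have h2 : HasDerivAt (fun S => (1/2) * (Bstar α σ γ t S) ^ 2 * c2)
        ((1/2) * (2 * Bstar α σ γ t T * P) * c2) T := by
      have := ((hB.pow 2).const_mul (1/2 : ℝ)).mul_const c2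
      refine this.congr_deriv ?_
      norm_num
    have := h1.add h2
    refine this.congr_of_eventuallyEq ?_
    filter_upwards with S
    rw [hμ]
    rfl
  have := hI.add hμd
  refine this.congr_deriv ?_
  ring
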